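/- arXiv:0909.4436 — 6 statements merged into one kernel-verified Lean document; each statement's English description precedes it below -/
import Mathlib

section
/- For every n ≥ 1, the (n+2)-nd prime is at most the sum of the (n+1)-st and n-th primes: p_{n+2} ≤ p_{n+1} + p_n. -/
open Real in
/-- Analogue of `Bertrand.real_main_inequality`, with an extra factor `2 * x`. -/
theorem ishikawa_real_main_inequality {x : ℝ} (x_large : (512 : ℝ) ≤ x) :
    2 * x * (x * (2 * x) ^ Real.sqrt (2 * x) * 4 ^ (2 * x / 3)) ≤ 4 ^ x := by
  have h5 : (0 : ℝ) < x := by linarith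
  -- concavity of the log of the quotient
  have h : ConcaveOn ℝ (Set.Ioi 0.5)
      (fun y : ℝ => log 2 + log y + log y + √(2 * y) * log (2 * y) - log 4 / 3 * y) := by
    apply ConcaveOn.sub
    · apply ConcaveOn.add
      · apply ConcaveOn.add
        · apply ConcaveOn.add
          · exact concaveOn_const _ (convex_Ioi _)
          · exact strictConcaveOn_log_Ioi.concaveOn.subset
              (Set.Ioi_subset_Ioi (by norm_num)) (convex_Ioi 0.5)
        · exact strictConcaveOn_log_Ioi.concaveOn.subset
            (Set.Ioi_subset_Ioi (by norm_num)) (convex_Ioi 0.5)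
      · convert ((strictConcaveOn_sqrt_mul_log_Ioi.concaveOn.comp_linearMap
          ((2 : ℝ) • LinearMap.id))) using 1
        iterate 2 rfl
        ext y
        simp only [Set.mem_Ioi, Set.mem_preimage, LinearMap.smul_apply,
          LinearMap.id_coe, id_eq, smul_eq_mul]
        rw [← mul_lt_mul_iff_right₀ (two_pos)]
        norm_num1
        rfl
        ext y
        simp
    apply ConvexOn.smul
    · exact div_nonneg (log_nonneg (by norm_num1)) (by norm_num1)
    · exact convexOn_id (convex_Ioi (0.5 : ℝ))
  have hlog2 : (0 : ℝ) < Real.log 2 := Real.log_pos (by norm_num)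
  have hlog4 : Real.log 4 = 2 * Real.log 2 := by
    rw [show (4 : ℝ) = 2 ^ (2 : ℕ) by norm_num, Real.log_pow]
    push_cast; ring
  -- value at 18 is nonneg
  have e18 : (0:ℝ) ≤ log 2 + log 18 + log 18 + √(2 * 18) * log (2 * 18) - log 4 / 3 * 18 := by
    have s : √(2 * 18 : ℝ) = 6 := by
      rw [show (2 * 18 : ℝ) = 6 ^ 2 by norm_num, Real.sqrt_sq (by norm_num : (0:ℝ) ≤ 6)]
    rw [s]
    have h36 : Real.log (2 * 18) = Real.log 2 + Real.log 18 :=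
      Real.log_mul (by norm_num) (by norm_num)
    have h218 : Real.log 2 ≤ Real.log 18 := Real.log_le_log (by norm_num) (by norm_num)
    rw [h36, hlog4]
    linarith
  -- value at 512 is nonpos
  have e512 : log 2 + log 512 + log 512 + √(2 * 512) * log (2 * 512) - log 4 / 3 * 512 ≤ 0 := by
    have s : √(2 * 512 : ℝ) = 32 := by
      rw [show (2 * 512 : ℝ) = 32 ^ 2 by norm_num, Real.sqrt_sq (by norm_num : (0:ℝ) ≤ 32)]
    rw [s]
    have h512 : Real.log 512 = 9 * Real.log 2 := by
      rw [show (512 : ℝ) = 2 ^ (9 : ℕ) by norm_num, Real.log_pow]; push_cast; ring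
    have h1024 : Real.log (2 * 512) = 10 * Real.log 2 := by
      rw [show (2 * 512 : ℝ) = 2 ^ (10 : ℕ) by norm_num, Real.log_pow]; push_cast; ring
    rw [h512, h1024, hlog4]
    linarith
  have hmem18 : (18 : ℝ) ∈ Set.Ioi (0.5 : ℝ) := by norm_num
  have hmemx : x ∈ Set.Ioi (0.5 : ℝ) := by
    simp only [Set.mem_Ioi]; linarith
  have hfx := h.right_le_of_le_left'' hmem18 hmemx (by norm_num : (18:ℝ) < 512) x_large
    (e512.trans e18)
  have hx0 : log 2 + log x + log x + √(2 * x) * log (2 * x) - log 4 / 3 * x ≤ 0 :=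
    le_trans hfx e512
  -- the key inequality
  have hx2 : (0 : ℝ) < 2 * x := by linarith
  have key : 2 * x * (x * (2 * x) ^ √(2 * x)) ≤ (4 : ℝ) ^ (x / 3) := by
    rw [← Real.log_le_log_iff (by positivity) (Real.rpow_pos_of_pos (by norm_num) _),
      Real.log_rpow (by norm_num : (0:ℝ) < 4),
      Real.log_mul (ne_of_gt hx2) (by positivity),
      Real.log_mul (ne_of_gt h5) (by positivity),
      Real.log_mul (by norm_num : (2:ℝ) ≠ 0) (ne_of_gt h5),
      Real.log_rpow hx2]
    nlinarith [hx0]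
  calc 2 * x * (x * (2 * x) ^ √(2 * x) * 4 ^ (2 * x / 3))
      = (2 * x * (x * (2 * x) ^ √(2 * x))) * 4 ^ (2 * x / 3) := by ring
    _ ≤ (4 : ℝ) ^ (x / 3) * 4 ^ (2 * x / 3) := by
        exact mul_le_mul_of_nonneg_right key (by positivity)
    _ = 4 ^ x := by
        rw [← Real.rpow_add (by norm_num : (0:ℝ) < 4)]
        congr 1
        ring

open Nat in
/-- Analogue of `Nat.bertrand_main_inequality`, with an extra factor `2 * n`. -/
theorem ishikawa_main_inequality {n : ℕ} (n_large : 512 ≤ n) :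
    2 * n * (n * (2 * n) ^ Nat.sqrt (2 * n) * 4 ^ (2 * n / 3)) ≤ 4 ^ n := by
  rw [← @Nat.cast_le ℝ]
  simp only [Nat.cast_add, Nat.cast_one, Nat.cast_mul, Nat.cast_pow, Nat.cast_ofNat, ← Real.rpow_natCast]
  refine _root_.trans ?_ (ishikawa_real_main_inequality (by exact_mod_cast n_large))
  gcongr
  · have n2_pos : 0 < 2 * n := by positivity
    exact_mod_cast n2_pos
  · exact_mod_cast Real.nat_sqrt_le_real_sqrt
  · norm_num1
  · exact Nat.cast_div_le.trans (by norm_cast)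

open Nat Finset in
/-- If `q` is the only prime in `(n, 2n]`, factorization of the central binomial coefficient. -/
theorem ishikawa_centralBinom_factorization (n q : ℕ) (n_large : 2 < n)
    (hqn : n < q) (hq2 : q ≤ 2 * n)
    (huniq : ∀ r : ℕ, r.Prime → n < r → r ≤ 2 * n → r = q) :
    centralBinom n =
      (∏ x ∈ Finset.range (2 * n / 3 + 1), x ^ (centralBinom n).factorization x)
        * q ^ (centralBinom n).factorization q := by
  have hq' : q ∉ Finset.range (2 * n / 3 + 1) := by
    simp only [Finset.mem_range]
    omega
  have h1 : (∏ x ∈ insert q (Finset.range (2 * n / 3 + 1)),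
      x ^ (centralBinom n).factorization x)
      = ∏ x ∈ Finset.range (2 * n + 1), x ^ (centralBinom n).factorization x := by
    apply Finset.prod_subset
    · intro x hx
      simp only [Finset.mem_insert, Finset.mem_range] at hx ⊢
      omega
    · intro x hx h2x
      simp only [Finset.mem_insert, Finset.mem_range, not_or] at h2x hx
      obtain ⟨hxq, hx3⟩ := h2x
      by_cases hp : x.Prime
      · rcases le_or_gt x n with hxn | hxn
        · rw [Nat.factorization_centralBinom_of_two_mul_self_lt_three_mul n_large hxn
            (by omega), pow_zero]
        · exact absurd (huniq x hp hxn (by omega)) hxq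
      · rw [Nat.factorization_eq_zero_of_not_prime _ hp, pow_zero]
  conv_lhs => rw [← Nat.prod_pow_factorization_centralBinom n]
  rw [← h1, Finset.prod_insert hq', mul_comm]

open Nat Finset in
/-- Bound on the product of the small prime powers in the central binomial coefficient,
extracted from the proof of `Nat.centralBinom_le_of_no_bertrand_prime`. -/
theorem ishikawa_prod_small_bound (n : ℕ) (n_large : 2 < n) :
    (∏ x ∈ Finset.range (2 * n / 3 + 1), x ^ (centralBinom n).factorization x)
      ≤ (2 * n) ^ Nat.sqrt (2 * n) * 4 ^ (2 * n / 3) := by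
  have n_pos : 0 < n := (Nat.zero_le _).trans_lt n_large
  have n2_pos : 1 ≤ 2 * n := mul_pos (zero_lt_two' ℕ) n_pos
  let S := (Finset.range (2 * n / 3 + 1)).filter Nat.Prime
  let f x := x ^ n.centralBinom.factorization x
  have hSf : ∏ x ∈ S, f x = ∏ x ∈ Finset.range (2 * n / 3 + 1), f x := by
    refine Finset.prod_filter_of_ne fun p _ h => ?_
    contrapose! h; dsimp only [f]
    rw [Nat.factorization_eq_zero_of_not_prime n.centralBinom h, pow_zero]
  rw [← hSf, ← Finset.prod_filter_mul_prod_filter_not S (· ≤ Nat.sqrt (2 * n))]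
  apply mul_le_mul'
  · refine (Finset.prod_le_prod' fun p _ => (?_ : f p ≤ 2 * n)).trans ?_
    · exact Nat.pow_factorization_choose_le (mul_pos two_pos n_pos)
    have : (Finset.Icc 1 (Nat.sqrt (2 * n))).card = Nat.sqrt (2 * n) := by
      rw [Nat.card_Icc, Nat.add_sub_cancel]
    rw [Finset.prod_const]
    refine pow_right_mono₀ n2_pos ((Finset.card_le_card fun x hx => ?_).trans this.le)
    obtain ⟨h1, h2⟩ := Finset.mem_filter.1 hx
    exact Finset.mem_Icc.mpr ⟨(Finset.mem_filter.1 h1).2.one_lt.le, h2⟩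
  · refine le_trans ?_ (primorial_le_4_pow (2 * n / 3))
    refine (Finset.prod_le_prod' fun p hp => (?_ : f p ≤ p)).trans ?_
    · obtain ⟨h1, h2⟩ := Finset.mem_filter.1 hp
      refine (pow_right_mono₀ (Finset.mem_filter.1 h1).2.one_lt.le ?_).trans (pow_one p).le
      exact Nat.factorization_choose_le_one (Nat.sqrt_lt'.mp <| not_le.1 h2)
    refine Finset.prod_le_prod_of_subset_of_one_le' (Finset.filter_subset _ _) ?_
    exact fun p hp _ => (Finset.mem_filter.1 hp).2.one_lt.le

open Nat in
/-- For large `n` there are at least two primes in `(n, 2n]`. -/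
theorem ishikawa_two_primes_eventually (n : ℕ) (n_large : 512 ≤ n) :
    ∃ a b : ℕ, a.Prime ∧ b.Prime ∧ n < a ∧ a < b ∧ b ≤ 2 * n := by
  by_contra h
  push_neg at h
  obtain ⟨q, hq, hq1, hq2⟩ := Nat.exists_prime_lt_and_le_two_mul n (by omega)
  have huniq : ∀ r : ℕ, r.Prime → n < r → r ≤ 2 * n → r = q := by
    intro r hr hr1 hr2
    by_contra hne
    rcases lt_or_gt_of_ne hne with hlt | hgt
    · have := h r q hr hq hr1 hlt; omega
    · have := h q r hq hr hq1 hgt; omega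
  have eq1 := ishikawa_centralBinom_factorization n q (by omega) hq1 hq2 huniq
  have hqe : q ^ (centralBinom n).factorization q ≤ 2 * n := by
    have h1 : (centralBinom n).factorization q ≤ 1 := by
      apply Nat.factorization_choose_le_one
      nlinarith
    calc q ^ (centralBinom n).factorization q ≤ q ^ 1 :=
          Nat.pow_le_pow_right hq.pos h1
      _ = q := pow_one q
      _ ≤ 2 * n := hq2
  have H3 : centralBinom n ≤ (2 * n) ^ Nat.sqrt (2 * n) * 4 ^ (2 * n / 3) * (2 * n) :=
    calc centralBinom n
        = (∏ x ∈ Finset.range (2 * n / 3 + 1), x ^ (centralBinom n).factorization x)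
          * q ^ (centralBinom n).factorization q := eq1
      _ ≤ (2 * n) ^ Nat.sqrt (2 * n) * 4 ^ (2 * n / 3) * (2 * n) :=
          Nat.mul_le_mul (ishikawa_prod_small_bound n (by omega)) hqe
  have H2 : 4 ^ n < n * centralBinom n :=
    Nat.four_pow_lt_mul_centralBinom n (by omega)
  have H1 := ishikawa_main_inequality n_large
  have contra : (4:ℕ) ^ n < 4 ^ n := by
    calc (4:ℕ) ^ n < n * centralBinom n := H2
      _ ≤ n * ((2 * n) ^ Nat.sqrt (2 * n) * 4 ^ (2 * n / 3) * (2 * n)) :=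
          Nat.mul_le_mul_left _ H3
      _ = 2 * n * (n * (2 * n) ^ Nat.sqrt (2 * n) * 4 ^ (2 * n / 3)) := by ring
      _ ≤ 4 ^ n := H1
  exact lt_irrefl _ contra

/-- Descent step for the small cases. -/
theorem ishikawa_two_primes_step {n : ℕ} (q : ℕ) {a b : ℕ} (ha : a.Prime) (hb : b.Prime)
    (hab : a < b) (hcov : b ≤ 2 * q)
    (H : n < q → ∃ a b : ℕ, a.Prime ∧ b.Prime ∧ n < a ∧ a < b ∧ b ≤ 2 * n)
    (hn : n < a) : ∃ a b : ℕ, a.Prime ∧ b.Prime ∧ n < a ∧ a < b ∧ b ≤ 2 * n := by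
  by_cases h : b ≤ 2 * n
  · exact ⟨a, b, ha, hb, hn, hab, h⟩
  · exact H (by omega)

/-- For all `n ≥ 6` there are at least two primes in `(n, 2n]`. -/
theorem ishikawa_two_primes (n : ℕ) (hn : 6 ≤ n) :
    ∃ a b : ℕ, a.Prime ∧ b.Prime ∧ n < a ∧ a < b ∧ b ≤ 2 * n := by
  rcases le_or_gt 512 n with h | h
  · exact ishikawa_two_primes_eventually n h
  · have h521 : n < 521 := by omega
    revert h521
    refine ishikawa_two_primes_step (b := 523) 269 (by norm_num) (by norm_num) (by norm_num)
      (by norm_num) ?_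
    refine ishikawa_two_primes_step (b := 271) 137 (by norm_num) (by norm_num) (by norm_num)
      (by norm_num) ?_
    refine ishikawa_two_primes_step (b := 139) 71 (by norm_num) (by norm_num) (by norm_num)
      (by norm_num) ?_
    refine ishikawa_two_primes_step (b := 73) 41 (by norm_num) (by norm_num) (by norm_num)
      (by norm_num) ?_
    refine ishikawa_two_primes_step (b := 43) 29 (by norm_num) (by norm_num) (by norm_num)
      (by norm_num) ?_
    refine ishikawa_two_primes_step (b := 31) 17 (by norm_num) (by norm_num) (by norm_num)
      (by norm_num) ?_
    refine ishikawa_two_primes_step (b := 19) 11 (by norm_num) (by norm_num) (by norm_num)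
      (by norm_num) ?_
    refine ishikawa_two_primes_step (b := 13) 7 (by norm_num) (by norm_num) (by norm_num)
      (by norm_num) ?_
    intro _
    exact ⟨7, 11, by norm_num, by norm_num, by omega, by norm_num, by omega⟩

theorem ishikawa_nth_le {k : ℕ} {a : ℕ} (ha : a.Prime) (h : Nat.nth Nat.Prime k < a) :
    Nat.nth Nat.Prime (k + 1) ≤ a := by
  have hc : k < Nat.count Nat.Prime a :=
    (Nat.lt_nth_iff_count_lt Nat.infinite_setOf_prime).2 h
  calc Nat.nth Nat.Prime (k + 1) ≤ Nat.nth Nat.Prime (Nat.count Nat.Prime a) :=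
        Nat.nth_monotone Nat.infinite_setOf_prime hc
    _ = a := Nat.nth_count ha

theorem ishikawa_nth_two : Nat.nth Nat.Prime 2 = 5 := by
  have : Nat.count Nat.Prime 5 = 2 := by decide
  rw [← this]
  exact Nat.nth_count (by norm_num)

theorem ishikawa_nth_three : Nat.nth Nat.Prime 3 = 7 := by
  have : Nat.count Nat.Prime 7 = 3 := by decide
  rw [← this]
  exact Nat.nth_count (by norm_num)

theorem ishikawa_nth_four : Nat.nth Nat.Prime 4 = 11 := by
  have : Nat.count Nat.Prime 11 = 4 := by decide
  rw [← this]
  exact Nat.nth_count (by norm_num)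

/-- `p n` is the n-th prime, 1-indexed: `p 1 = 2`, `p 2 = 3`, `p 3 = 5`, ... -/
noncomputable def p (n : ℕ) : ℕ := Nat.nth Nat.Prime (n - 1)

theorem prime_add_ge (n : ℕ) (hn : 1 ≤ n) : p (n + 2) ≤ p (n + 1) + p n := by
  obtain ⟨k, rfl⟩ : ∃ k, n = k + 1 := ⟨n - 1, by omega⟩
  have ep : ∀ m : ℕ, p (m + 1) = Nat.nth Nat.Prime m := fun m => by
    simp [p]
  rw [show k + 1 + 2 = (k + 2) + 1 by omega, show k + 1 + 1 = (k + 1) + 1 by omega,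
    ep, ep, ep]
  -- goal : nth Prime (k+2) ≤ nth Prime (k+1) + nth Prime k
  rcases le_or_gt 3 k with hk | hk
  · -- large case: use two primes in (p_k, 2 p_k]
    have h7 : 7 ≤ Nat.nth Nat.Prime k := by
      calc 7 = Nat.nth Nat.Prime 3 := ishikawa_nth_three.symm
        _ ≤ Nat.nth Nat.Prime k := Nat.nth_monotone Nat.infinite_setOf_prime hk
    obtain ⟨a, b, ha, hb, h1, h2, h3⟩ :=
      ishikawa_two_primes (Nat.nth Nat.Prime k) (by omega)
    have hk1 : Nat.nth Nat.Prime (k + 1) ≤ a := ishikawa_nth_le ha h1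
    have hk2 : Nat.nth Nat.Prime (k + 2) ≤ b :=
      ishikawa_nth_le hb (lt_of_le_of_lt hk1 h2)
    have hlt : Nat.nth Nat.Prime k < Nat.nth Nat.Prime (k + 1) :=
      Nat.nth_lt_nth Nat.infinite_setOf_prime |>.2 (by omega)
    omega
  · -- small cases k = 0, 1, 2
    interval_cases k
    · rw [ishikawa_nth_two, Nat.nth_prime_one_eq_three, Nat.nth_prime_zero_eq_two]
    · rw [ishikawa_nth_three, ishikawa_nth_two, Nat.nth_prime_one_eq_three]
      norm_num
    · rw [ishikawa_nth_four, ishikawa_nth_three, ishikawa_nth_two]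
      norm_num
end

section
/- Assume that for every m ≥ 10 one has p_{m+1} − p_m − 1 < p_m/5 (equivalently, 5·p_{m+1} < 6·p_m + 5). Then for every n > 9, regarding the primes as real numbers, p_{n+1}^2 + p_n^2 − p_{n+2}^2 > (229·p_n^2 − 2460·p_n − 2400)/5^4. -/
theorem nagura_sq_bound
    (hNagura : ∀ m : ℕ, 10 ≤ m → 5 * p (m + 1) < 6 * p m + 5) :
    ∀ n : ℕ, 9 < n →
      (p (n + 1) : ℝ) ^ 2 + (p n : ℝ) ^ 2 - (p (n + 2) : ℝ) ^ 2 >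
        (229 * (p n : ℝ) ^ 2 - 2460 * (p n : ℝ) - 2400) / 5 ^ 4 := by
  intro n hn
  have h1 : 5 * p (n + 1) ≤ 6 * p n + 4 := by
    have := hNagura n (by omega); omega
  have h2 : 5 * p (n + 2) ≤ 6 * p (n + 1) + 4 := by
    have := hNagura (n + 1) (by omega); norm_num [Nat.add_assoc] at this; omega
  have hb : p n < p (n + 1) := by
    unfold p
    exact Nat.nth_lt_nth (Nat.infinite_setOf_prime) |>.2 (by omega)
  have hp2 : 2 ≤ p n := (Nat.prime_nth_prime _).two_le
  have h1' : 5 * (p (n + 1) : ℝ) ≤ 6 * (p n : ℝ) + 4 := by exact_mod_cast h1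
  have h2' : 5 * (p (n + 2) : ℝ) ≤ 6 * (p (n + 1) : ℝ) + 4 := by exact_mod_cast h2
  have hb' : (p n : ℝ) + 1 ≤ (p (n + 1) : ℝ) := by exact_mod_cast hb
  have hp2' : (2 : ℝ) ≤ (p n : ℝ) := by exact_mod_cast hp2
  have hc : (0 : ℝ) ≤ (p (n + 2) : ℝ) := by positivity
  rw [gt_iff_lt, div_lt_iff₀ (by norm_num : (0:ℝ) < 5 ^ 4)]
  nlinarith [sq_nonneg ((p (n+1) : ℝ) - (p n : ℝ)), sq_nonneg ((p (n+2) : ℝ)),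
    mul_le_mul h2' h2' (by positivity) (by linarith),
    mul_le_mul h1' h1' (by positivity) (by linarith)]
end

section
/- Assume that for every m ≥ 10 one has 5·p_{m+1} < 6·p_m + 5. Then for every n > 9, p_{n+2}^2 < p_{n+1}^2 + p_n^2. -/
lemma p10 : p 10 = 29 := by
  have h : Nat.count Nat.Prime 29 = 9 := by decide
  have := Nat.nth_count (p := Nat.Prime) (n := 29) (by norm_num)
  simpa [p, h] using this

lemma p_mono {a b : ℕ} (h : a ≤ b) : p a ≤ p b := by
  exact (Nat.nth_le_nth Nat.infinite_setOf_prime).mpr (by omega)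

theorem nagura_implies_sq_lt
    (hNagura : ∀ m : ℕ, 10 ≤ m → 5 * p (m + 1) < 6 * p m + 5) :
    ∀ n : ℕ, 9 < n → p (n + 2) ^ 2 < p (n + 1) ^ 2 + p n ^ 2 := by
  intro n hn
  have h1 := hNagura n (by omega)
  have h2 := hNagura (n + 1) (by omega)
  have ha : 29 ≤ p n := by
    have := p_mono (show 10 ≤ n by omega); rw [p10] at this
    omega
  nlinarith [sq_nonneg (p n), sq_nonneg (p (n+1)), sq_nonneg (p (n+2)),
    mul_le_mul h1.le h1.le (Nat.zero_le _) (Nat.zero_le _),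
    mul_le_mul h2.le h2.le (Nat.zero_le _) (Nat.zero_le _)]
end

section
/- Assume that for every m ≥ 119 one has p_{m+1} − p_m − 1 < p_m/13 (equivalently, 13·p_{m+1} < 14·p_m + 13). Then for every n > 118, regarding the primes as real numbers, p_{n+1}^3 + p_n^3 − p_{n+2}^3 > (3325841·p_n^3 − 23658180·p_n^2 − 56847882·p_n − 38416742)/13^6. -/
theorem rohrbach_weis_cube_bound
    (hRW : ∀ m : ℕ, 119 ≤ m → 13 * p (m + 1) < 14 * p m + 13) :
    ∀ n : ℕ, 118 < n →
      (p (n + 1) : ℝ) ^ 3 + (p n : ℝ) ^ 3 - (p (n + 2) : ℝ) ^ 3 >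
        (3325841 * (p n : ℝ) ^ 3 - 23658180 * (p n : ℝ) ^ 2 - 56847882 * (p n : ℝ)
          - 38416742) / 13 ^ 6 := by
  intro n hn
  have hn' : 119 ≤ n := hn
  have h1 := hRW n hn'
  have h2 := hRW (n + 1) (by omega)
  set a := p n
  set b := p (n + 1)
  set c := p (n + 2)
  have hb : (13 : ℝ) * b ≤ 14 * a + 12 := by
    have : 13 * b ≤ 14 * a + 12 := by omega
    exact_mod_cast this
  have hc : (13 : ℝ) * c ≤ 14 * b + 12 := by
    have : 13 * c ≤ 14 * b + 12 := by omega
    exact_mod_cast this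
  have ha0 : (0 : ℝ) ≤ a := Nat.cast_nonneg a
  have hb0 : (0 : ℝ) ≤ b := Nat.cast_nonneg b
  have hc0 : (0 : ℝ) ≤ c := Nat.cast_nonneg c
  have hc3 : ((13 : ℝ) * c) ^ 3 ≤ (14 * b + 12) ^ 3 :=
    pow_le_pow_left₀ (by positivity) hc 3
  have hb3 : ((13 : ℝ) * b) ^ 3 ≤ (14 * a + 12) ^ 3 :=
    pow_le_pow_left₀ (by positivity) hb 3
  have hb2 : ((13 : ℝ) * b) ^ 2 ≤ (14 * a + 12) ^ 2 :=
    pow_le_pow_left₀ (by positivity) hb 2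
  rw [gt_iff_lt, div_lt_iff₀ (by norm_num)]
  nlinarith [sq_nonneg ((a : ℝ)), ha0, hb, hc3, hb3, hb2]
end

section
/- Assume that for every m ≥ 119 one has 13·p_{m+1} < 14·p_m + 13. Then for every n > 118, p_{n+2}^3 < p_{n+1}^3 + p_n^3. -/
theorem rohrbach_weis_implies_cube_lt
    (hRW : ∀ m : ℕ, 119 ≤ m → 13 * p (m + 1) < 14 * p m + 13) :
    ∀ n : ℕ, 118 < n → p (n + 2) ^ 3 < p (n + 1) ^ 3 + p n ^ 3 := by
  intro n hn
  have h1 := hRW n (by omega)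
  have h2 := hRW (n + 1) (by omega)
  have hmono := Nat.nth_monotone (p := Nat.Prime) Nat.infinite_setOf_prime
  have hab : p n ≤ p (n + 1) := by
    unfold p; exact hmono (by omega)
  have h11 : Nat.nth Nat.Prime 4 = 11 := by
    have := Nat.nth_count (p := Nat.Prime) (n := 11) (by norm_num)
    have hc : Nat.count Nat.Prime 11 = 4 := by decide
    rwa [hc] at this
  have ha : 11 ≤ p n := by
    unfold p
    calc 11 = Nat.nth Nat.Prime 4 := h11.symm
    _ ≤ Nat.nth Nat.Prime (n - 1) := hmono (by omega)
  nlinarith [h1, h2, ha, hab, sq_nonneg (p n), sq_nonneg (p (n+1)), sq_nonneg (p (n+2)),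
    mul_le_mul h1.le h1.le (Nat.zero_le _) (Nat.zero_le _),
    mul_le_mul h2.le h2.le (Nat.zero_le _) (Nat.zero_le _)]
end

section
/- For every n ≥ 1, there exists an integer m with p_{n+1} + 1 ≤ m ≤ p_{n+1} + p_n such that m has a prime divisor strictly greater than p_n. -/
section TwoPrimes

open Real in
/-- Analogue of `Bertrand.real_main_inequality` with an extra factor `2 * x`. -/
theorem real_main_inequality2 {x : ℝ} (x_large : (512 : ℝ) ≤ x) :
    x * (2 * x) * (2 * x) ^ √(2 * x) * 4 ^ (2 * x / 3) ≤ 4 ^ x := by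
  let f : ℝ → ℝ := fun x => log x + log (2 * x) + √(2 * x) * log (2 * x) - log 4 / 3 * x
  have hf' : ∀ x, 0 < x → 0 < x * (2 * x) * (2 * x) ^ √(2 * x) / 4 ^ (x / 3) := fun x h =>
    div_pos (mul_pos (mul_pos h (by linarith)) (rpow_pos_of_pos (mul_pos two_pos h) _))
      (rpow_pos_of_pos four_pos _)
  have hf : ∀ x, 0 < x → f x = log (x * (2 * x) * (2 * x) ^ √(2 * x) / 4 ^ (x / 3)) := by
    intro x h5
    have h6 := mul_pos (zero_lt_two' ℝ) h5
    have h7 := rpow_pos_of_pos h6 (√(2 * x))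
    rw [log_div (by positivity) (rpow_pos_of_pos four_pos _).ne',
      log_mul (by positivity) h7.ne', log_mul h5.ne' h6.ne',
      log_rpow h6, log_rpow zero_lt_four]
    ring
  have h5 : 0 < x := lt_of_lt_of_le (by norm_num1) x_large
  rw [show (4:ℝ) ^ x = 4 ^ (2 * x / 3) * 4 ^ (x / 3) by
      rw [← rpow_add four_pos]; ring_nf,
    mul_comm ((4:ℝ) ^ (2 * x / 3))]
  rw [mul_le_mul_iff_left₀ (rpow_pos_of_pos four_pos _), ← div_le_one (rpow_pos_of_pos four_pos _),
    ← log_nonpos_iff (hf' x h5).le, ← hf x h5]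
  have h : ConcaveOn ℝ (Set.Ioi 0.5) f := by
    apply ConcaveOn.sub
    · apply ConcaveOn.add
      · apply ConcaveOn.add
        · exact strictConcaveOn_log_Ioi.concaveOn.subset
            (Set.Ioi_subset_Ioi (by norm_num)) (convex_Ioi 0.5)
        · convert (strictConcaveOn_log_Ioi.concaveOn.comp_linearMap
            ((2 : ℝ) • LinearMap.id)).subset ?_ (convex_Ioi 0.5) using 1
          · rfl
          · rfl
          · rfl
          intro y hy
          simp only [Set.mem_Ioi, Set.mem_preimage, LinearMap.smul_apply,
            LinearMap.id_coe, id_eq, smul_eq_mul]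
          simp only [Set.mem_Ioi] at hy
          linarith
      convert ((strictConcaveOn_sqrt_mul_log_Ioi.concaveOn.comp_linearMap
        ((2 : ℝ) • LinearMap.id))) using 1
      · rfl
      · rfl
      ext y
      simp only [Set.mem_Ioi, Set.mem_preimage, LinearMap.smul_apply,
        LinearMap.id_coe, id_eq, smul_eq_mul]
      rw [← mul_lt_mul_iff_right₀ (two_pos)]
      norm_num1
      rfl
      rfl
    apply ConvexOn.smul
    · refine div_nonneg (log_nonneg (by norm_num1)) (by norm_num1)
    · exact convexOn_id (convex_Ioi (0.5 : ℝ))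
  suffices ∃ x1 x2, 0.5 < x1 ∧ x1 < x2 ∧ x2 ≤ x ∧ 0 ≤ f x1 ∧ f x2 ≤ 0 by
    obtain ⟨x1, x2, h1, h2, h0, h3, h4⟩ := this
    exact (h.right_le_of_le_left'' h1 ((h1.trans h2).trans_le h0) h2 h0 (h4.trans h3)).trans h4
  refine ⟨18, 512, by norm_num1, by norm_num1, x_large, ?_, ?_⟩
  · have hs : √(2 * 18 : ℝ) = 6 := (sqrt_eq_iff_mul_self_eq_of_pos (by norm_num1)).mpr (by norm_num1)
    have h18 : log (18 : ℝ) = log 2 + 2 * log 3 := by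
      rw [show (18:ℝ) = 2 * 3 ^ 2 by norm_num, log_mul (by norm_num) (by positivity), log_pow]
      push_cast; ring
    have h36 : log (2 * 18 : ℝ) = 2 * log 2 + 2 * log 3 := by
      rw [show (2 * 18:ℝ) = 2 ^ 2 * 3 ^ 2 by norm_num, log_mul (by positivity) (by positivity),
        log_pow, log_pow]
      push_cast; ring
    have h4 : log (4 : ℝ) = 2 * log 2 := by
      rw [show (4:ℝ) = 2 ^ 2 by norm_num, log_pow]; push_cast; ring
    have l2 : 0 ≤ log (2:ℝ) := log_nonneg (by norm_num)
    have l3 : 0 ≤ log (3:ℝ) := log_nonneg (by norm_num)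
    simp only [f, hs, h18, h36, h4]
    nlinarith
  · have hs : √(2 * 512 : ℝ) = 32 :=
      (sqrt_eq_iff_mul_self_eq_of_pos (by norm_num1)).mpr (by norm_num1)
    have h512 : log (512 : ℝ) = 9 * log 2 := by
      rw [show (512:ℝ) = 2 ^ 9 by norm_num, log_pow]; push_cast; ring
    have h1024 : log (2 * 512 : ℝ) = 10 * log 2 := by
      rw [show (2 * 512:ℝ) = 2 ^ 10 by norm_num, log_pow]; push_cast; ring
    have h4 : log (4 : ℝ) = 2 * log 2 := by
      rw [show (4:ℝ) = 2 ^ 2 by norm_num, log_pow]; push_cast; ring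
    have l2 : 0 ≤ log (2:ℝ) := log_nonneg (by norm_num)
    simp only [f, hs, h512, h1024, h4]
    nlinarith

open Nat in
theorem nat_main_inequality2 {n : ℕ} (n_large : 512 ≤ n) :
    n * (2 * n) * (2 * n) ^ Nat.sqrt (2 * n) * 4 ^ (2 * n / 3) ≤ 4 ^ n := by
  rw [← @Nat.cast_le ℝ]
  simp only [Nat.cast_mul, Nat.cast_pow, ← Real.rpow_natCast]
  refine _root_.trans ?_ (real_main_inequality2 (by exact_mod_cast n_large))
  gcongr
  · norm_num
  · rw [Nat.cast_ofNat]
    gcongr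
    · have n2_pos : 0 < 2 * n := by positivity
      exact_mod_cast n2_pos
    · exact_mod_cast Real.nat_sqrt_le_real_sqrt
  · rw [Nat.cast_ofNat]
    gcongr
    · norm_num1
    · exact Nat.cast_div_le.trans (by norm_cast)

open Nat in
/-- An upper bound on the part of `centralBinom n` coming from primes at most `2 * n / 3`. -/
theorem smallrange_bound (n : ℕ) (n_pos : 0 < n) :
    (∏ q ∈ Finset.range (2 * n / 3 + 1), q ^ (centralBinom n).factorization q) ≤
      (2 * n) ^ Nat.sqrt (2 * n) * 4 ^ (2 * n / 3) := by
  have n2_pos : 1 ≤ 2 * n := by omega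
  let S := (Finset.range (2 * n / 3 + 1)).filter Nat.Prime
  let f := fun x => x ^ n.centralBinom.factorization x
  have hSf : ∏ x ∈ S, f x = ∏ x ∈ Finset.range (2 * n / 3 + 1), f x := by
    refine Finset.prod_filter_of_ne fun q _ h => ?_
    contrapose! h; dsimp only [f]
    rw [Nat.factorization_eq_zero_of_not_prime n.centralBinom h, _root_.pow_zero]
  rw [← hSf, ← Finset.prod_filter_mul_prod_filter_not S (· ≤ Nat.sqrt (2 * n))]
  apply mul_le_mul'
  · refine (Finset.prod_le_prod' fun q _ => (?_ : f q ≤ 2 * n)).trans ?_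
    · exact Nat.pow_factorization_choose_le (by omega)
    have hc : (Finset.Icc 1 (Nat.sqrt (2 * n))).card = Nat.sqrt (2 * n) := by
      rw [Nat.card_Icc, Nat.add_sub_cancel]
    rw [Finset.prod_const]
    refine pow_right_mono₀ n2_pos ((Finset.card_le_card fun x hx => ?_).trans hc.le)
    obtain ⟨h1, h2⟩ := Finset.mem_filter.1 hx
    exact Finset.mem_Icc.mpr ⟨(Finset.mem_filter.1 h1).2.one_lt.le, h2⟩
  · refine le_trans ?_ (primorial_le_4_pow (2 * n / 3))
    refine (Finset.prod_le_prod' fun q hq => (?_ : f q ≤ q)).trans ?_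
    · obtain ⟨h1, h2⟩ := Finset.mem_filter.1 hq
      refine (pow_right_mono₀ (Finset.mem_filter.1 h1).2.one_lt.le ?_).trans (pow_one q).le
      exact Nat.factorization_choose_le_one (Nat.sqrt_lt'.mp <| not_le.1 h2)
    refine Finset.prod_le_prod_of_subset_of_one_le' (Finset.filter_subset _ _) ?_
    exact fun q hq _ => (Finset.mem_filter.1 hq).2.one_lt.le

open Nat in
theorem centralBinom_le_of_no_two_primes (n : ℕ) (n_large : 512 ≤ n)
    (no2 : ¬∃ a b : ℕ, a.Prime ∧ b.Prime ∧ n < a ∧ a < b ∧ b ≤ 2 * n) :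
    centralBinom n ≤ (2 * n) ^ Nat.sqrt (2 * n) * 4 ^ (2 * n / 3) * (2 * n) := by
  obtain ⟨p0, hp0, hnp0, hp02n⟩ := Nat.exists_prime_lt_and_le_two_mul n (by omega)
  have hsplit :
      (∏ q ∈ Finset.range (2 * n / 3 + 1), q ^ (centralBinom n).factorization q) *
      (∏ q ∈ Finset.Ico (2 * n / 3 + 1) (2 * n + 1), q ^ (centralBinom n).factorization q) =
      centralBinom n := by
    rw [Finset.range_eq_Ico, Finset.prod_Ico_consecutive _ (Nat.zero_le _) (by omega),
      ← Finset.range_eq_Ico]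
    exact Nat.prod_pow_factorization_centralBinom n
  rw [← hsplit]
  refine mul_le_mul' (smallrange_bound n (by omega)) ?_
  have hIco : ∏ q ∈ Finset.Ico (2 * n / 3 + 1) (2 * n + 1),
      q ^ (centralBinom n).factorization q = p0 ^ (centralBinom n).factorization p0 := by
    refine Finset.prod_eq_single p0 (fun b hb hne => ?_) (fun h => absurd ?_ h)
    · rw [Finset.mem_Ico] at hb
      by_cases hbp : b.Prime
      · by_cases hbn : b ≤ n
        · rw [Nat.factorization_centralBinom_of_two_mul_self_lt_three_mul (by omega) hbn
            (by omega), _root_.pow_zero]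
        · exfalso
          rcases Nat.lt_or_ge b p0 with h1 | h1
          · exact no2 ⟨b, p0, hbp, hp0, by omega, h1, hp02n⟩
          · have h2 : p0 < b := lt_of_le_of_ne h1 (Ne.symm hne)
            exact no2 ⟨p0, b, hp0, hbp, hnp0, h2, by omega⟩
      · rw [Nat.factorization_eq_zero_of_not_prime _ hbp, _root_.pow_zero]
    · exact Finset.mem_Ico.mpr ⟨by omega, by omega⟩
  rw [hIco]
  calc p0 ^ (centralBinom n).factorization p0 ≤ p0 ^ 1 := by
        refine Nat.pow_le_pow_right hp0.pos ?_
        exact Nat.factorization_choose_le_one (by nlinarith)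
    _ = p0 := pow_one p0
    _ ≤ 2 * n := hp02n

open Nat in
theorem two_primes_eventually (n : ℕ) (hn : 512 ≤ n) :
    ∃ a b : ℕ, a.Prime ∧ b.Prime ∧ n < a ∧ a < b ∧ b ≤ 2 * n := by
  by_contra no2
  have H1 := nat_main_inequality2 hn
  have H2 := Nat.four_pow_lt_mul_centralBinom n (by omega)
  have H3 := centralBinom_le_of_no_two_primes n hn no2
  have H4 : n * centralBinom n ≤
      n * ((2 * n) ^ Nat.sqrt (2 * n) * 4 ^ (2 * n / 3) * (2 * n)) :=
    Nat.mul_le_mul_left _ H3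
  have e : n * ((2 * n) ^ Nat.sqrt (2 * n) * 4 ^ (2 * n / 3) * (2 * n)) =
      n * (2 * n) * (2 * n) ^ Nat.sqrt (2 * n) * 4 ^ (2 * n / 3) := by ring
  rw [e] at H4
  exact absurd (H2.trans_le (H4.trans H1)) (lt_irrefl _)

theorem tp_step {n : ℕ} (r : ℕ) {a b : ℕ} (ha : a.Prime) (hb : b.Prime) (hab : a < b)
    (cov : b ≤ 2 * r)
    (H : n < r → ∃ a b : ℕ, a.Prime ∧ b.Prime ∧ n < a ∧ a < b ∧ b ≤ 2 * n) (hn : n < a) :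
    ∃ a b : ℕ, a.Prime ∧ b.Prime ∧ n < a ∧ a < b ∧ b ≤ 2 * n := by
  by_cases hle : b ≤ 2 * n
  · exact ⟨a, b, ha, hb, hn, hab, hle⟩
  · exact H (by omega)

/-- For `n ≥ 7` there are at least two primes in `(n, 2n]`. -/
theorem two_primes (n : ℕ) (hn : 7 ≤ n) :
    ∃ a b : ℕ, a.Prime ∧ b.Prime ∧ n < a ∧ a < b ∧ b ≤ 2 * n := by
  rcases lt_or_ge 511 n with h | h
  · exact two_primes_eventually n (by omega)
  refine tp_step 317 (a := 547) (b := 631) (by norm_num) (by norm_num) (by norm_num)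
    (by norm_num) ?_ (by omega)
  refine fun h1 => tp_step 277 (a := 317) (b := 547) (by norm_num) (by norm_num) (by norm_num) (by norm_num) ?_ h1
  refine fun h1 => tp_step 163 (a := 277) (b := 317) (by norm_num) (by norm_num) (by norm_num) (by norm_num) ?_ h1
  refine fun h1 => tp_step 139 (a := 163) (b := 277) (by norm_num) (by norm_num) (by norm_num) (by norm_num) ?_ h1
  refine fun h1 => tp_step 83 (a := 139) (b := 163) (by norm_num) (by norm_num) (by norm_num) (by norm_num) ?_ h1
  refine fun h1 => tp_step 73 (a := 83) (b := 139) (by norm_num) (by norm_num) (by norm_num) (by norm_num) ?_ h1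
  refine fun h1 => tp_step 43 (a := 73) (b := 83) (by norm_num) (by norm_num) (by norm_num) (by norm_num) ?_ h1
  refine fun h1 => tp_step 37 (a := 43) (b := 73) (by norm_num) (by norm_num) (by norm_num) (by norm_num) ?_ h1
  refine fun h1 => tp_step 23 (a := 37) (b := 43) (by norm_num) (by norm_num) (by norm_num) (by norm_num) ?_ h1
  refine fun h1 => tp_step 19 (a := 23) (b := 37) (by norm_num) (by norm_num) (by norm_num) (by norm_num) ?_ h1
  refine fun h1 => tp_step 13 (a := 19) (b := 23) (by norm_num) (by norm_num) (by norm_num) (by norm_num) ?_ h1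
  refine fun h1 => tp_step 11 (a := 13) (b := 19) (by norm_num) (by norm_num) (by norm_num) (by norm_num) ?_ h1
  refine fun h1 => tp_step 7 (a := 11) (b := 13) (by norm_num) (by norm_num) (by norm_num) (by norm_num) ?_ h1
  exact fun h1 => absurd h1 (by omega)

end TwoPrimes

theorem nth_prime_succ_le {k q : ℕ} (hq : q.Prime) (h : Nat.nth Nat.Prime k < q) :
    Nat.nth Nat.Prime (k + 1) ≤ q := by
  have hinf := Nat.infinite_setOf_prime
  have hc : k < Nat.count Nat.Prime q := (Nat.lt_nth_iff_count_lt hinf).2 h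
  calc Nat.nth Nat.Prime (k + 1) ≤ Nat.nth Nat.Prime (Nat.count Nat.Prime q) :=
        (Nat.nth_le_nth hinf).2 hc
    _ = q := Nat.nth_count hq

theorem sylvester_schur_step (n : ℕ) (hn : 1 ≤ n) :
    ∃ m : ℕ, p (n + 1) + 1 ≤ m ∧ m ≤ p (n + 1) + p n ∧
      ∃ q : ℕ, q.Prime ∧ q ∣ m ∧ p n < q := by
  have hinf := Nat.infinite_setOf_prime
  have hpn : p n = Nat.nth Nat.Prime (n - 1) := rfl
  have hpn1 : p (n + 1) = Nat.nth Nat.Prime n := by simp [p]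
  have hlt : p n < p (n + 1) := by
    rw [hpn, hpn1]
    exact (Nat.nth_lt_nth hinf).2 (by omega)
  rcases le_or_gt 4 n with h4 | h4
  · -- main case: `p n ≥ 7`
    have h2 : Nat.nth Nat.Prime 2 = 5 := Nat.nth_count Nat.prime_five
    have h3 : Nat.nth Nat.Prime 3 = 7 := by
      have : Nat.count Nat.Prime 7 = 3 := by decide
      calc Nat.nth Nat.Prime 3 = Nat.nth Nat.Prime (Nat.count Nat.Prime 7) := by rw [this]
        _ = 7 := Nat.nth_count (by norm_num)
    have h7 : 7 ≤ p n := by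
      rw [hpn, ← h3]
      exact (Nat.nth_le_nth hinf).2 (by omega)
    obtain ⟨a, b, hap, hbp, h1, hab, h2n⟩ := two_primes (p n) h7
    have hna : p (n + 1) ≤ a := by
      rw [hpn1, show n = (n - 1) + 1 by omega]
      exact nth_prime_succ_le hap (hpn ▸ h1)
    refine ⟨b, by omega, by omega, b, hbp, dvd_refl b, by omega⟩
  · -- small cases `n = 1, 2, 3`
    have e0 : Nat.nth Nat.Prime 0 = 2 := Nat.nth_prime_zero_eq_two
    have e1 : Nat.nth Nat.Prime 1 = 3 := Nat.nth_prime_one_eq_three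
    have e2 : Nat.nth Nat.Prime 2 = 5 := Nat.nth_count Nat.prime_five
    have e3 : Nat.nth Nat.Prime 3 = 7 := by
      have hc : Nat.count Nat.Prime 7 = 3 := by decide
      calc Nat.nth Nat.Prime 3 = Nat.nth Nat.Prime (Nat.count Nat.Prime 7) := by rw [hc]
        _ = 7 := Nat.nth_count (by norm_num)
    interval_cases n
    · exact ⟨5, by simp [p, e0, e1], by simp [p, e0, e1], 5, by norm_num, dvd_refl 5,
        by simp [p, e0]⟩
    · exact ⟨7, by simp [p, e1, e2], by simp [p, e1, e2], 7, by norm_num, dvd_refl 7,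
        by simp [p, e1]⟩
    · exact ⟨11, by simp [p, e2, e3], by simp [p, e2, e3], 11, by norm_num, dvd_refl 11,
        by simp [p, e2]⟩
end
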